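/- Let A ⊆ ℝ^d be a nonempty compact set, σ ⊆ ℝ^d a nonempty compact set, and α a real number with 0 ≤ α < reach(A). If A ∩ 𝓑(σ, α) ≠ ∅, then reach(A ∩ 𝓑(σ, α)) ≥ reach(A). -/

import Mathlib

open Metric Set ENNReal

open scoped RealInnerProductSpace

/-- The reach of a set `X`: the supremum of all `r ≥ 0` such that every point `y`
with `dist (y, X) < r` has a unique nearest point in `X`. -/
noncomputable def reach {d : ℕ} (X : Set (EuclideanSpace ℝ (Fin d))) : ℝ≥0∞ :=
  sSup {r : ℝ≥0∞ | ∀ y : EuclideanSpace ℝ (Fin d),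
    ENNReal.ofReal (Metric.infDist y X) < r →
      ∃! x, x ∈ X ∧ ∀ x' ∈ X, dist y x ≤ dist y x'}

namespace ReachAux

variable {d : ℕ}

local notation "E" => EuclideanSpace ℝ (Fin d)

/-- `x` is a nearest point of `y` in `A`. -/
def IsNear (A : Set (EuclideanSpace ℝ (Fin d))) (y x : EuclideanSpace ℝ (Fin d)) : Prop :=
  x ∈ A ∧ ∀ b ∈ A, dist y x ≤ dist y b

lemma lt_of_sq_lt' {a b : ℝ} (ha : 0 ≤ a) (hb : 0 < b) (h : a ^ 2 < b ^ 2) : a < b := by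
  nlinarith

lemma le_infDist' {A : Set E} (hA : A.Nonempty) {x : E} {b : ℝ}
    (h : ∀ y ∈ A, b ≤ dist x y) : b ≤ infDist x A := by
  rw [infDist_eq_iInf]
  haveI : Nonempty A := hA.to_subtype
  exact le_ciInf fun y => h y y.2

lemma exists_near {A : Set E} (hAc : IsCompact A) (hA : A.Nonempty) (y : E) :
    ∃ x, IsNear A y x ∧ dist y x = infDist y A := by
  obtain ⟨x, hxA, hx⟩ := hAc.exists_infDist_eq_dist hA y
  exact ⟨x, ⟨hxA, fun b hb => by rw [← hx]; exact infDist_le_dist_of_mem hb⟩, hx.symm⟩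

lemma unique_of_lt_reach {A : Set E} {y : E}
    (h : ENNReal.ofReal (infDist y A) < reach A) :
    ∃! x, x ∈ A ∧ ∀ x' ∈ A, dist y x ≤ dist y x' := by
  rw [reach, lt_sSup_iff] at h
  obtain ⟨s, hs, hlt⟩ := h
  exact hs y hlt

set_option maxHeartbeats 1600000 in
/-- Cluster lemma: if moving from `x` in direction `w` does not increase the distance to `A`,
then `w` has nonpositive inner product with `x - p` where `p` is the unique nearest point. -/
lemma cluster {A : Set E} (hAc : IsCompact A) (hA : A.Nonempty) (x p : E)
    (hp : IsNear A x p) (huniq : ∀ p', IsNear A x p' → p' = p)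
    (w : E) (ε₀ : ℝ) (hε₀ : 0 < ε₀)
    (hd : ∀ ε : ℝ, 0 < ε → ε < ε₀ → infDist (x + ε • w) A ≤ dist x p) :
    ⟪w, x - p⟫ ≤ 0 := by
  have hεpos : ∀ n : ℕ, 0 < ε₀ / (n + 2) := fun n => by positivity
  have hεlt : ∀ n : ℕ, ε₀ / (n + 2) < ε₀ := by
    intro n
    rw [div_lt_iff₀ (by positivity)]
    have : (0:ℝ) ≤ (n:ℝ) := Nat.cast_nonneg n
    nlinarith
  have hεtend : Filter.Tendsto (fun n : ℕ => ε₀ / (n + 2)) Filter.atTop (nhds 0) :=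
    Filter.Tendsto.div_atTop (tendsto_const_nhds)
      (Filter.tendsto_atTop_add_const_right _ 2 tendsto_natCast_atTop_atTop)
  have hsel : ∀ n : ℕ, ∃ q, IsNear A (x + (ε₀ / (n + 2)) • w) q ∧
      dist (x + (ε₀ / (n + 2)) • w) q = infDist (x + (ε₀ / (n + 2)) • w) A :=
    fun n => exists_near hAc hA _
  choose pn hpn hpnd using hsel
  have hM : ∀ n : ℕ, dist (x + (ε₀ / (n + 2)) • w) (pn n) ≤ dist x p := by
    intro n; rw [hpnd n]; exact hd _ (hεpos n) (hεlt n)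
  have hkey : ∀ n, ⟪w, x - pn n⟫ ≤ 0 := by
    intro n
    set ε : ℝ := ε₀ / (n + 2) with hε
    have h1 : ‖(x - pn n) + ε • w‖ ^ 2 ≤ (dist x p) ^ 2 := by
      have heqn : ‖(x - pn n) + ε • w‖ = dist (x + ε • w) (pn n) := by
        rw [dist_eq_norm]; congr 1; abel
      rw [heqn]
      have := hM n
      nlinarith [dist_nonneg (x := x + ε • w) (y := pn n)]
    have h2 : dist x p ≤ dist x (pn n) := hp.2 _ (hpn n).1
    have h3 : (dist x p) ^ 2 ≤ ‖x - pn n‖ ^ 2 := by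
      rw [← dist_eq_norm]
      nlinarith [dist_nonneg (x := x) (y := p)]
    rw [norm_add_sq_real, real_inner_smul_right] at h1
    have h4 : 2 * (ε * ⟪x - pn n, w⟫) + ‖ε • w‖ ^ 2 ≤ 0 := by linarith
    have h6 : ⟪x - pn n, w⟫ ≤ 0 := by
      by_contra hpos
      push_neg at hpos
      nlinarith [hεpos n, sq_nonneg ‖ε • w‖]
    rw [real_inner_comm]
    exact h6
  obtain ⟨pinf, hpinfA, φ, hφ, hconv⟩ := hAc.tendsto_subseq (fun n => (hpn n).1)
  have hεφ : Filter.Tendsto (fun n => ε₀ / (φ n + 2)) Filter.atTop (nhds 0) :=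
    hεtend.comp hφ.tendsto_atTop
  have hpinfnear : IsNear A x pinf := by
    refine ⟨hpinfA, fun b hb => ?_⟩
    have hb1 : ∀ n, dist x (pn (φ n)) ≤ dist x b + 2 * (ε₀ / (φ n + 2)) * ‖w‖ := by
      intro n
      set ε : ℝ := ε₀ / (φ n + 2) with hε
      have t1 : dist x (pn (φ n)) ≤ dist x (x + ε • w) + dist (x + ε • w) (pn (φ n)) :=
        dist_triangle _ _ _
      have t2 : dist (x + ε • w) (pn (φ n)) ≤ dist (x + ε • w) b := by
        rw [hpnd (φ n)]; exact infDist_le_dist_of_mem hb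
      have t3 : dist (x + ε • w) b ≤ dist x b + dist (x + ε • w) x := by
        linarith [dist_triangle (x + ε • w) x b]
      have t4 : dist (x + ε • w) x = ε * ‖w‖ := by
        rw [dist_eq_norm]
        simp [norm_smul, abs_of_pos (hεpos (φ n))]
        exact Or.inl (hεpos (φ n)).le
      have t5 : dist x (x + ε • w) = ε * ‖w‖ := by rw [dist_comm]; exact t4
      nlinarith [norm_nonneg w, (hεpos (φ n)).le]
    have hlim : Filter.Tendsto (fun n => dist x (pn (φ n))) Filter.atTop (nhds (dist x pinf)) :=
      (Continuous.dist continuous_const continuous_id).continuousAt.tendsto.comp hconv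
    have hlim2 : Filter.Tendsto (fun n => dist x b + 2 * (ε₀ / (φ n + 2)) * ‖w‖) Filter.atTop
        (nhds (dist x b + 2 * 0 * ‖w‖)) :=
      Filter.Tendsto.add tendsto_const_nhds
        (Filter.Tendsto.mul (Filter.Tendsto.const_mul _ hεφ) tendsto_const_nhds)
    have := le_of_tendsto_of_tendsto' hlim hlim2 hb1
    simpa using this
  have hpeq : pinf = p := huniq _ hpinfnear
  have hlim3 : Filter.Tendsto (fun n => ⟪w, x - pn (φ n)⟫) Filter.atTop (nhds ⟪w, x - pinf⟫) :=
    Filter.Tendsto.inner tendsto_const_nhds (Filter.Tendsto.sub tendsto_const_nhds hconv)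
  have := le_of_tendsto hlim3 (Filter.Eventually.of_forall (fun n => hkey (φ n)))
  rwa [hpeq] at this

/-- Dual cone lemma. -/
lemma cone (g n : E) (hn : n ≠ 0) (h : ∀ w : E, ⟪w, n⟫ < 0 → ⟪w, g⟫ ≤ 0) :
    ∃ l : ℝ, 0 ≤ l ∧ g = l • n := by
  have hnorm : 0 < ‖n‖ := norm_pos_iff.mpr hn
  have hn2 : (0:ℝ) < ‖n‖ ^ 2 := by positivity
  obtain ⟨c, hc⟩ : ∃ c : ℝ, ⟪g, n⟫ = c := ⟨_, rfl⟩
  set l : ℝ := c / ‖n‖ ^ 2 with hl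
  set gp : E := g - l • n with hgp
  have hnn : ⟪n, n⟫ = ‖n‖ ^ 2 := real_inner_self_eq_norm_sq n
  have hgpn : ⟪gp, n⟫ = 0 := by
    rw [hgp, inner_sub_left, real_inner_smul_left, hnn, hc, hl]
    field_simp
    ring
  have hgpg : ⟪gp, g⟫ = ‖gp‖ ^ 2 := by
    have hgeq : g = gp + l • n := by rw [hgp]; abel
    calc ⟪gp, g⟫ = ⟪gp, gp + l • n⟫ := by rw [← hgeq]
    _ = ⟪gp, gp⟫ + l * ⟪gp, n⟫ := by rw [inner_add_right, real_inner_smul_right]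
    _ = ‖gp‖ ^ 2 := by rw [hgpn, real_inner_self_eq_norm_sq]; ring
  have hng : 0 ≤ ⟪n, g⟫ := by
    have h1 : ⟪-n, n⟫ < 0 := by
      rw [inner_neg_left, hnn]; linarith
    have h2 := h _ h1
    rw [inner_neg_left] at h2
    linarith
  have hkey : ∀ cc : ℝ, 0 < cc → ‖gp‖ ^ 2 - cc * ⟪n, g⟫ ≤ 0 := by
    intro cc hcc
    have h1 : ⟪gp - cc • n, n⟫ < 0 := by
      rw [inner_sub_left, hgpn, real_inner_smul_left, hnn]
      nlinarith
    have h2 := h _ h1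
    rw [inner_sub_left, hgpg, real_inner_smul_left] at h2
    linarith
  have hgp0 : gp = 0 := by
    by_contra hne
    have hp : 0 < ‖gp‖ ^ 2 := by
      have := norm_pos_iff.mpr hne
      positivity
    rcases eq_or_lt_of_le hng with heq | hlt
    · have := hkey 1 one_pos
      rw [← heq] at this
      linarith
    · have hnl := hkey (‖gp‖ ^ 2 / (2 * ⟪n, g⟫)) (by positivity)
      obtain ⟨e, he⟩ : ∃ e : ℝ, ⟪n, g⟫ = e := ⟨_, rfl⟩
      rw [he] at hnl hlt
      have h2 : ‖gp‖ ^ 2 / (2 * e) * e = ‖gp‖ ^ 2 / 2 := by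
        field_simp
      rw [h2] at hnl
      linarith
  have hlnonneg : 0 ≤ l := by
    rw [hl]
    apply div_nonneg _ hn2.le
    rw [← hc]
    rwa [real_inner_comm] at hng
  refine ⟨l, hlnonneg, ?_⟩
  have : g - l • n = 0 := hgp0
  linear_combination (norm := module) this

set_option maxHeartbeats 1600000 in
/-- One extension step: extend the normal ray from `t0` to `T < 3 * t0`. -/
lemma step {A : Set E} (hAc : IsCompact A) (hA : A.Nonempty) (R₀ : ℝ)
    (HR : ∀ x : E, infDist x A ≤ R₀ → ∀ p' p'', IsNear A x p' → IsNear A x p'' → p' = p'')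
    (a : E) (haA : a ∈ A) (u : E) (hu : ‖u‖ = 1) (t0 T : ℝ) (ht0 : 0 < t0)
    (hbase : ∀ b ∈ A, t0 ≤ dist (a + t0 • u) b)
    (hT1 : t0 ≤ T) (hT3 : T < 3 * t0) (hTR : T ≤ R₀) :
    ∀ b ∈ A, T ≤ dist (a + T • u) b := by
  rcases eq_or_lt_of_le hT1 with rfl | hT1'
  · exact hbase
  set r : ℝ := T - t0 with hr
  have hrpos : 0 < r := by rw [hr]; linarith
  set q : E := a + t0 • u with hq
  have hqa : dist q a = t0 := by
    rw [hq, dist_eq_norm]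
    simp [norm_smul, abs_of_pos ht0, hu]
  have hδq : infDist q A = t0 := by
    apply le_antisymm
    · rw [← hqa]; exact infDist_le_dist_of_mem haA
    · exact le_infDist' hA hbase
  obtain ⟨xh, hxhD, hmax⟩ := (isCompact_closedBall q r).exists_isMaxOn
    ⟨q, mem_closedBall_self hrpos.le⟩ ((continuous_infDist_pt A).continuousOn)
  set M : ℝ := infDist xh A with hM
  have hMt0 : t0 ≤ M := by
    have := hmax (mem_closedBall_self hrpos.le)
    simpa [hM, hδq] using this
  have hMT : M ≤ T := by
    have h1 : infDist xh A ≤ infDist q A + dist xh q := infDist_le_infDist_add_dist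
    have h2 : dist xh q ≤ r := by rwa [mem_closedBall] at hxhD
    rw [hδq] at h1
    rw [hM, hr] at *
    linarith
  obtain ⟨p, hpnear, hpd⟩ := exists_near hAc hA xh
  have hdistxp : dist xh p = M := by rw [hpd, hM]
  have huniqx : ∀ p', IsNear A xh p' → p' = p := by
    intro p' h'
    exact HR xh (by rw [← hM]; linarith) p' p h' hpnear
  have hxhp : xh ≠ p := by
    intro heq
    rw [heq, dist_self] at hdistxp
    linarith
  have hbdry : dist xh q = r := by
    rcases eq_or_lt_of_le ((mem_closedBall).mp hxhD) with h | h
    · exact h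
    · exfalso
      have hall : ∀ w : E, ⟪w, xh - p⟫ ≤ 0 := by
        intro w
        by_cases hw : w = 0
        · simp [hw]
        · have hwn : 0 < ‖w‖ := norm_pos_iff.mpr hw
          apply cluster hAc hA xh p hpnear huniqx w ((r - dist xh q) / ‖w‖)
            (div_pos (by linarith) hwn)
          intro ε hε1 hε2
          have h7 : ε * ‖w‖ < r - dist xh q := (lt_div_iff₀ hwn).mp hε2
          have hmem : xh + ε • w ∈ closedBall q r := by
            rw [mem_closedBall]
            calc dist (xh + ε • w) q ≤ dist (xh + ε • w) xh + dist xh q := dist_triangle _ _ _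
            _ = ε * ‖w‖ + dist xh q := by
                rw [dist_eq_norm]
                simp [norm_smul, abs_of_pos hε1]
            _ ≤ r := by linarith
          have := hmax hmem
          rw [hpd]
          simpa using this
      have h9 := hall (xh - p)
      rw [real_inner_self_eq_norm_sq] at h9
      have hne : xh - p ≠ 0 := sub_ne_zero_of_ne hxhp
      have hlt0 : 0 < ‖xh - p‖ := norm_pos_iff.mpr hne
      nlinarith
  have hnne : xh - q ≠ 0 := by
    intro h0
    rw [sub_eq_zero] at h0
    rw [h0, dist_self] at hbdry
    linarith
  have hcone : ∀ w : E, ⟪w, xh - q⟫ < 0 → ⟪w, xh - p⟫ ≤ 0 := by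
    intro w hwn
    have hw : w ≠ 0 := by
      intro h0; rw [h0] at hwn; simp at hwn
    have hwpos : 0 < ‖w‖ := norm_pos_iff.mpr hw
    have hw2 : (0:ℝ) < ‖w‖ ^ 2 := by positivity
    apply cluster hAc hA xh p hpnear huniqx w (-2 * ⟪w, xh - q⟫ / ‖w‖ ^ 2)
      (div_pos (by linarith) hw2)
    intro ε hε1 hε2
    have h3 : ε * ‖w‖ ^ 2 < -2 * ⟪w, xh - q⟫ := (lt_div_iff₀ hw2).mp hε2
    have hmem : xh + ε • w ∈ closedBall q r := by
      rw [mem_closedBall]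
      have hsq : ‖(xh - q) + ε • w‖ ^ 2 ≤ r ^ 2 := by
        rw [norm_add_sq_real, real_inner_smul_right]
        have h1 : ‖xh - q‖ = r := by rw [← dist_eq_norm]; exact hbdry
        have h2 : ‖ε • w‖ ^ 2 = ε ^ 2 * ‖w‖ ^ 2 := by
          rw [norm_smul, Real.norm_eq_abs, abs_of_pos hε1]; ring
        have hcomm : ⟪xh - q, w⟫ = ⟪w, xh - q⟫ := real_inner_comm _ _
        rw [h1, h2, hcomm]
        nlinarith [mul_lt_mul_of_pos_left h3 hε1]
      have heqd : dist (xh + ε • w) q = ‖(xh - q) + ε • w‖ := by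
        rw [dist_eq_norm]; congr 1; abel
      rw [heqd]
      nlinarith [norm_nonneg ((xh - q) + ε • w), hrpos.le]
    have := hmax hmem
    rw [hpd]
    simpa using this
  obtain ⟨l, hl0, hgl⟩ := cone (xh - p) (xh - q) hnne hcone
  have hnorm_n : ‖xh - q‖ = r := by rw [← dist_eq_norm]; exact hbdry
  have hnorm_g : ‖xh - p‖ = M := by rw [← dist_eq_norm]; exact hdistxp
  have hMlr : M = l * r := by
    rw [← hnorm_g, hgl, norm_smul, Real.norm_eq_abs, abs_of_nonneg hl0, hnorm_n]
  have hqp : q - p = (l - 1) • (xh - q) := by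
    have h0 : q - p = (xh - p) - (xh - q) := by abel
    rw [h0, hgl]
    module
  by_cases hlM : r ≤ M
  · -- main case
    have hl1 : 1 ≤ l := by nlinarith
    have hdistqp : dist q p = M - r := by
      rw [dist_eq_norm, hqp, norm_smul, Real.norm_eq_abs, abs_of_nonneg (by linarith : (0:ℝ) ≤ l - 1), hnorm_n,
        hMlr]
      ring
    have hpnearq : IsNear A q p := by
      refine ⟨hpnear.1, fun b hb => ?_⟩
      have h1 : M ≤ dist xh b := by rw [hM]; exact infDist_le_dist_of_mem hb
      have h2 : dist xh b ≤ dist xh q + dist q b := dist_triangle _ _ _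
      rw [hbdry] at h2
      rw [hdistqp]
      linarith
    have hanearq : IsNear A q a := ⟨haA, fun b hb => by rw [hqa]; exact hbase b hb⟩
    have hpa : p = a := HR q (by rw [hδq]; linarith) p a hpnearq hanearq
    have hMTeq : M = T := by
      have h1 : dist q p = t0 := by rw [hpa, hqa]
      rw [hdistqp, hr] at h1
      linarith
    have hlr : l * r = t0 + r := by
      rw [← hMlr, hMTeq, hr]; ring
    have hl1' : l - 1 = t0 / r := by
      field_simp
      linarith
    have hl1pos : 0 < l - 1 := by
      rw [hl1']; positivity
    have hxha : xh = a + T • u := by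
      have h1 : xh - p = l • (xh - (a + t0 • u)) := by rw [← hq]; exact hgl
      rw [hpa] at h1
      have e1 : (l - 1) • (xh - a) = (l * t0) • u := by
        linear_combination (norm := module) (-1 : ℝ) • h1
      have e2 : (r * (l - 1)) • (xh - a) = (r * (l * t0)) • u := by
        rw [mul_smul, mul_smul, e1]
      have e3 : r * (l - 1) = t0 := by
        have hrne : r ≠ 0 := ne_of_gt hrpos
        rw [hl1']
        field_simp
      have e4 : r * (l * t0) = t0 * T := by
        have : l * r = T := by rw [← hMlr, hMTeq]
        nlinarith [this]
      have e5 : t0 • (xh - a) = (t0 * T) • u := by rw [e3, e4] at e2; exact e2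
      have e6 : t0 • (xh - a) = t0 • (T • u) := by rw [e5, smul_smul]
      have e7 : xh - a = T • u := smul_right_injective _ (ne_of_gt ht0) e6
      have e8 := sub_eq_iff_eq_add.mp e7
      rw [e8, add_comm]
    intro b hb
    have h1 : M ≤ dist xh b := by rw [hM]; exact infDist_le_dist_of_mem hb
    rw [hxha] at h1
    linarith
  · exfalso
    push_neg at hlM
    have hdistqp : dist q p = r - M := by
      have hl1 : l < 1 := by nlinarith
      rw [dist_eq_norm, hqp, norm_smul, Real.norm_eq_abs, abs_of_neg (by linarith : l - 1 < 0), hnorm_n, hMlr]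
      ring
    have h8 : t0 ≤ dist q p := by
      rw [← hδq]; exact infDist_le_dist_of_mem hpnear.1
    rw [hdistqp, hr] at h8
    linarith


/-- Iterated extension: extend the normal ray from `t0` up to any `T ≤ min R₀ (2^n * t0)`. -/
lemma extend_pow {A : Set (EuclideanSpace ℝ (Fin d))} (hAc : IsCompact A) (hA : A.Nonempty)
    (R₀ : ℝ)
    (HR : ∀ x : EuclideanSpace ℝ (Fin d), infDist x A ≤ R₀ →
      ∀ p' p'', IsNear A x p' → IsNear A x p'' → p' = p'') :
    ∀ n : ℕ, ∀ a ∈ A, ∀ u : EuclideanSpace ℝ (Fin d), ‖u‖ = 1 → ∀ t0 T : ℝ, 0 < t0 →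
      (∀ b ∈ A, t0 ≤ dist (a + t0 • u) b) → t0 ≤ T → T ≤ R₀ → T ≤ 2 ^ n * t0 →
      ∀ b ∈ A, T ≤ dist (a + T • u) b := by
  intro n
  induction n with
  | zero =>
    intro a haA u hu t0 T ht0 hbase hT1 hTR hTpow
    have : T = t0 := by norm_num at hTpow; linarith
    rw [this]
    exact hbase
  | succ n ih =>
    intro a haA u hu t0 T ht0 hbase hT1 hTR hTpow
    by_cases hT2 : T ≤ 2 * t0
    · exact step hAc hA R₀ HR a haA u hu t0 T ht0 hbase hT1 (by linarith) hTR
    · push_neg at hT2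
      have hbase2 : ∀ b ∈ A, 2 * t0 ≤ dist (a + (2 * t0) • u) b :=
        step hAc hA R₀ HR a haA u hu t0 (2 * t0) ht0 hbase (by linarith) (by linarith)
          (by linarith)
      have hpow : T ≤ 2 ^ n * (2 * t0) := by
        have : (2:ℝ) ^ (n+1) * t0 = 2 ^ n * (2 * t0) := by ring
        linarith [hTpow, this.symm.le]
      exact ih a haA u hu (2 * t0) T (by linarith) hbase2 hT2.le hTR hpow

/-- Full extension of the normal ray up to `R₀`. -/
lemma extend {A : Set (EuclideanSpace ℝ (Fin d))} (hAc : IsCompact A) (hA : A.Nonempty)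
    (R₀ : ℝ)
    (HR : ∀ x : EuclideanSpace ℝ (Fin d), infDist x A ≤ R₀ →
      ∀ p' p'', IsNear A x p' → IsNear A x p'' → p' = p'')
    (a : EuclideanSpace ℝ (Fin d)) (haA : a ∈ A) (u : EuclideanSpace ℝ (Fin d)) (hu : ‖u‖ = 1)
    (t0 T : ℝ) (ht0 : 0 < t0)
    (hbase : ∀ b ∈ A, t0 ≤ dist (a + t0 • u) b)
    (hT1 : t0 ≤ T) (hTR : T ≤ R₀) :
    ∀ b ∈ A, T ≤ dist (a + T • u) b := by
  obtain ⟨n, hn⟩ := pow_unbounded_of_one_lt (T / t0) (by norm_num : (1:ℝ) < 2)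
  have hpow : T ≤ 2 ^ n * t0 := by
    rw [div_lt_iff₀ ht0] at hn
    linarith
  exact extend_pow hAc hA R₀ HR n a haA u hu t0 T ht0 hbase hT1 hTR hpow

/-- Federer's normal inequality. -/
lemma normal_ineq {A : Set (EuclideanSpace ℝ (Fin d))} (hAc : IsCompact A) (hA : A.Nonempty)
    (r : ℝ) (hr : 0 < r)
    (HR : ∀ x : EuclideanSpace ℝ (Fin d), infDist x A ≤ r →
      ∀ p' p'', IsNear A x p' → IsNear A x p'' → p' = p'')
    (m p : EuclideanSpace ℝ (Fin d)) (hnear : IsNear A m p) (htr : dist m p ≤ r) :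
    ∀ b ∈ A, ⟪m - p, b - p⟫ ≤ dist m p * ‖b - p‖ ^ 2 / (2 * r) := by
  intro b hb
  by_cases ht : dist m p = 0
  · have hmp0 : m = p := by rwa [dist_eq_zero] at ht
    rw [hmp0]
    simp
  · have htpos : 0 < dist m p := lt_of_le_of_ne dist_nonneg (Ne.symm ht)
    set t : ℝ := dist m p with htdef
    have hmp : ‖m - p‖ = t := by rw [htdef, dist_eq_norm]
    set u : EuclideanSpace ℝ (Fin d) := t⁻¹ • (m - p) with hu
    have hunorm : ‖u‖ = 1 := by
      rw [hu, norm_smul, Real.norm_eq_abs, abs_of_pos (inv_pos.mpr htpos), hmp]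
      field_simp
    have hmu : p + t • u = m := by
      rw [hu, smul_smul, mul_inv_cancel₀ (ne_of_gt htpos), one_smul]
      abel
    have hbase : ∀ c ∈ A, t ≤ dist (p + t • u) c := by
      intro c hc
      rw [hmu]
      calc t = dist m p := htdef.symm
      _ ≤ dist m c := hnear.2 c hc
    have hfar : ∀ c ∈ A, r ≤ dist (p + r • u) c :=
      extend hAc hA r HR p hnear.1 u hunorm t r htpos hbase htr (le_refl r)
    have hfb := hfar b hb
    have hsq : r ^ 2 ≤ ‖r • u - (b - p)‖ ^ 2 := by
      have heq : dist (p + r • u) b = ‖r • u - (b - p)‖ := by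
        rw [dist_eq_norm]; congr 1; abel
      rw [heq] at hfb
      nlinarith [norm_nonneg (r • u - (b - p)), hr.le]
    have hexp : ‖r • u - (b - p)‖ ^ 2
        = r ^ 2 - 2 * r * ⟪u, b - p⟫ + ‖b - p‖ ^ 2 := by
      rw [norm_sub_sq_real, norm_smul, real_inner_smul_left, Real.norm_eq_abs,
        abs_of_pos hr]
      rw [hunorm]
      ring
    have hub : ⟪u, b - p⟫ ≤ ‖b - p‖ ^ 2 / (2 * r) := by
      rw [hexp] at hsq
      rw [le_div_iff₀ (by positivity)]
      nlinarith
    have hinner : ⟪m - p, b - p⟫ = t * ⟪u, b - p⟫ := by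
      have : m - p = t • u := by rw [← hmu]; abel
      rw [this, real_inner_smul_left]
    rw [hinner]
    calc t * ⟪u, b - p⟫ ≤ t * (‖b - p‖ ^ 2 / (2 * r)) :=
      mul_le_mul_of_nonneg_left hub htpos.le
    _ = t * ‖b - p‖ ^ 2 / (2 * r) := by ring


end ReachAux

set_option maxHeartbeats 3200000 in
theorem stmt_3 {d : ℕ} (A : Set (EuclideanSpace ℝ (Fin d)))
    (hA : A.Nonempty) (hAc : IsCompact A)
    (σ : Set (EuclideanSpace ℝ (Fin d))) (hσne : σ.Nonempty) (hσc : IsCompact σ)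
    (α : ℝ) (hα0 : 0 ≤ α) (hα : ENNReal.ofReal α < reach A)
    (hne : (A ∩ ⋂ z ∈ σ, Metric.closedBall z α).Nonempty) :
    reach A ≤ reach (A ∩ ⋂ z ∈ σ, Metric.closedBall z α) := by
  classical
  set X := A ∩ ⋂ z ∈ σ, Metric.closedBall z α with hXdef
  have hXc : IsCompact X :=
    hAc.inter_right (isClosed_biInter (fun z _ => Metric.isClosed_closedBall))
  have hXne : X.Nonempty := hne
  by_contra hlt
  push_neg at hlt
  have hmaxlt : max (reach X) (ENNReal.ofReal α) < reach A := max_lt hlt hα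
  obtain ⟨e, he1, he2⟩ := exists_between hmaxlt
  have heT : e ≠ ⊤ := ne_top_of_lt he2
  set r : ℝ := e.toReal with hrdef
  have hofr : ENNReal.ofReal r = e := ENNReal.ofReal_toReal heT
  have hαr : α < r := by
    have h1 : ENNReal.ofReal α < ENNReal.ofReal r := by
      rw [hofr]
      exact lt_of_le_of_lt (le_max_right _ _) he1
    exact (ENNReal.ofReal_lt_ofReal_iff_of_nonneg hα0).mp h1
  have hr0 : 0 < r := lt_of_le_of_lt hα0 hαr
  have HR : ∀ x, infDist x A ≤ r →
      ∀ p' p'', ReachAux.IsNear A x p' → ReachAux.IsNear A x p'' → p' = p'' := by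
    intro x hx p' p'' h' h''
    have h1 : ENNReal.ofReal (infDist x A) < reach A :=
      lt_of_le_of_lt (le_trans (ENNReal.ofReal_le_ofReal hx) hofr.le) he2
    obtain ⟨w, hw, huq⟩ := ReachAux.unique_of_lt_reach h1
    have e1 : p' = w := huq p' ⟨h'.1, h'.2⟩
    have e2 : p'' = w := huq p'' ⟨h''.1, h''.2⟩
    rw [e1, e2]
  have hmem : e ∈ {rr : ℝ≥0∞ | ∀ y : EuclideanSpace ℝ (Fin d),
      ENNReal.ofReal (Metric.infDist y X) < rr →
        ∃! x, x ∈ X ∧ ∀ x' ∈ X, dist y x ≤ dist y x'} := by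
    intro y hy
    have hyr : infDist y X < r := by
      rw [← hofr] at hy
      exact (ENNReal.ofReal_lt_ofReal_iff hr0).mp hy
    obtain ⟨x₁, hx₁near, hx₁d⟩ := ReachAux.exists_near hXc hXne y
    refine ⟨x₁, ⟨hx₁near.1, hx₁near.2⟩, ?_⟩
    rintro x₂ ⟨hx₂X, hx₂min⟩
    by_contra hne12
    -- set-up
    set ρ : ℝ := infDist y X with hρdef
    have hρ1 : dist y x₁ = ρ := by rw [hx₁d]
    have hρ2 : dist y x₂ = ρ := by
      apply le_antisymm
      · rw [← hρ1]; exact hx₂min x₁ hx₁near.1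
      · rw [hρdef]; exact infDist_le_dist_of_mem hx₂X
    have hρr : ρ < r := hyr
    have hx₁A : x₁ ∈ A := hx₁near.1.1
    have hx₂A : x₂ ∈ A := hx₂X.1
    have hball1 : ∀ z ∈ σ, dist x₁ z ≤ α := by
      intro z hz
      have := Set.mem_iInter₂.mp hx₁near.1.2 z hz
      rwa [Metric.mem_closedBall] at this
    have hball2 : ∀ z ∈ σ, dist x₂ z ≤ α := by
      intro z hz
      have := Set.mem_iInter₂.mp hx₂X.2 z hz
      rwa [Metric.mem_closedBall] at this
    set h : ℝ := dist x₁ x₂ / 2 with hhdef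
    have hh0 : 0 < h := by
      rw [hhdef]
      have : x₁ ≠ x₂ := fun hcl => hne12 (hcl.symm)
      have := dist_pos.mpr this
      linarith
    obtain ⟨m, hm⟩ : ∃ mm : EuclideanSpace ℝ (Fin d), mm = (2⁻¹ : ℝ) • (x₁ + x₂) := ⟨_, rfl⟩
    have hpar : ∀ a c : EuclideanSpace ℝ (Fin d),
        ‖a + c‖ ^ 2 + ‖a - c‖ ^ 2 = 2 * (‖a‖ ^ 2 + ‖c‖ ^ 2) := by
      intro a c
      have := parallelogram_law_with_norm ℝ a c
      simpa only [pow_two] using this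
    have hcn : ‖(2⁻¹ : ℝ) • (x₁ - x₂)‖ = h := by
      rw [norm_smul, Real.norm_eq_abs, ← dist_eq_norm, hhdef]
      rw [abs_of_pos (by norm_num : (0:ℝ) < 2⁻¹)]
      ring
    -- I1
    have hI1 : ‖y - m‖ ^ 2 = ρ ^ 2 - h ^ 2 := by
      have hpar1 := hpar (y - m) ((2⁻¹ : ℝ) • (x₁ - x₂))
      have ee1 : (y - m) + (2⁻¹ : ℝ) • (x₁ - x₂) = y - x₂ := by rw [hm]; module
      have ee2 : (y - m) - (2⁻¹ : ℝ) • (x₁ - x₂) = y - x₁ := by rw [hm]; module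
      rw [ee1, ee2, hcn] at hpar1
      have hn1 : ‖y - x₁‖ = ρ := by rw [← dist_eq_norm, hρ1]
      have hn2 : ‖y - x₂‖ = ρ := by rw [← dist_eq_norm, hρ2]
      rw [hn1, hn2] at hpar1
      linarith [hpar1]
    -- I2
    have hI2 : ∀ z ∈ σ, ‖m - z‖ ^ 2 ≤ α ^ 2 - h ^ 2 := by
      intro z hz
      have hpar2 := hpar (m - z) ((2⁻¹ : ℝ) • (x₁ - x₂))
      have ee3 : (m - z) + (2⁻¹ : ℝ) • (x₁ - x₂) = x₁ - z := by rw [hm]; module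
      have ee4 : (m - z) - (2⁻¹ : ℝ) • (x₁ - x₂) = x₂ - z := by rw [hm]; module
      rw [ee3, ee4, hcn] at hpar2
      have hn3 : ‖x₁ - z‖ ≤ α := by rw [← dist_eq_norm]; exact hball1 z hz
      have hn4 : ‖x₂ - z‖ ≤ α := by rw [← dist_eq_norm]; exact hball2 z hz
      have q1 : ‖x₁ - z‖ ^ 2 ≤ α ^ 2 := pow_le_pow_left₀ (norm_nonneg _) hn3 2
      have q2 : ‖x₂ - z‖ ^ 2 ≤ α ^ 2 := pow_le_pow_left₀ (norm_nonneg _) hn4 2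
      linarith [hpar2, q1, q2]
    -- nearest point of m in A
    obtain ⟨p, hpnear, hpd⟩ := ReachAux.exists_near hAc hA m
    set t : ℝ := dist m p with htdef
    have hdm₁ : dist m x₁ = h := by
      have ee5 : m - x₁ = -((2⁻¹ : ℝ) • (x₁ - x₂)) := by rw [hm]; module
      rw [dist_eq_norm, ee5, norm_neg, hcn]
    have ht_h : t ≤ h := by
      rw [htdef, ← hdm₁]
      exact hpnear.2 x₁ hx₁A
    have hh_ρ : h ≤ ρ := by
      have := dist_triangle x₁ y x₂
      rw [dist_comm x₁ y, hρ1, hρ2] at this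
      rw [hhdef]
      linarith
    have ht0 : 0 ≤ t := dist_nonneg
    have htr : t ≤ r := by linarith
    -- I3
    have hI3 : ‖x₁ - p‖ ^ 2 + ‖x₂ - p‖ ^ 2 = 2 * (t ^ 2 + h ^ 2) := by
      have hpar3 := hpar (m - p) ((2⁻¹ : ℝ) • (x₁ - x₂))
      have ee6 : (m - p) + (2⁻¹ : ℝ) • (x₁ - x₂) = x₁ - p := by rw [hm]; module
      have ee7 : (m - p) - (2⁻¹ : ℝ) • (x₁ - x₂) = x₂ - p := by rw [hm]; module
      rw [ee6, ee7, hcn] at hpar3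
      have hn5 : ‖m - p‖ = t := by rw [← dist_eq_norm, htdef]
      rw [hn5] at hpar3
      linarith
    -- normal inequality
    have hK1 := ReachAux.normal_ineq hAc hA r hr0 HR m p hpnear htr x₁ hx₁A
    have hK2 := ReachAux.normal_ineq hAc hA r hr0 HR m p hpnear htr x₂ hx₂A
    have hsum : ⟪m - p, x₁ - p⟫ + ⟪m - p, x₂ - p⟫ = 2 * t ^ 2 := by
      have ee8 : (x₁ - p) + (x₂ - p) = (2 : ℝ) • (m - p) := by rw [hm]; module
      rw [← inner_add_right, ee8, real_inner_smul_right, real_inner_self_eq_norm_sq]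
      rw [← dist_eq_norm, ← htdef]
    have ht2r : 2 * t ^ 2 * r ≤ t * (t ^ 2 + h ^ 2) := by
      have hadd := add_le_add hK1 hK2
      rw [hsum] at hadd
      have h2r : (0:ℝ) < 2 * r := by linarith
      rw [← add_div, le_div_iff₀ h2r] at hadd
      have hmul : t * ‖x₁ - p‖ ^ 2 + t * ‖x₂ - p‖ ^ 2 = 2 * t ^ 3 + 2 * t * h ^ 2 := by
        linear_combination t * hI3
      linarith [hadd, hmul]
    -- the quantitative bound  t ≤ r - sqrt (r² - h²)
    set S : ℝ := Real.sqrt (r ^ 2 - h ^ 2) with hSdef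
    have hrh : h ≤ r := by linarith
    have hh2r2 : h ^ 2 ≤ r ^ 2 := pow_le_pow_left₀ hh0.le hrh 2
    have hS2 : S ^ 2 = r ^ 2 - h ^ 2 := Real.sq_sqrt (by linarith)
    have hS0 : 0 ≤ S := Real.sqrt_nonneg _
    have hSr : S ≤ r := by
      have h1 : S ≤ Real.sqrt (r ^ 2) := Real.sqrt_le_sqrt (by linarith [sq_nonneg h])
      rwa [Real.sqrt_sq hr0.le] at h1
    have hbound : t ≤ r - S := by
      rcases eq_or_lt_of_le ht0 with h0 | htpos
      · linarith
      · have h2tr : 2 * t * r ≤ t ^ 2 + h ^ 2 := by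
          have hfac : (2 * t * r) * t ≤ (t ^ 2 + h ^ 2) * t := by linarith [ht2r]
          exact le_of_mul_le_mul_right hfac htpos
        have h1 : r ^ 2 - h ^ 2 ≤ (r - t) ^ 2 := by
          have hexp : (r - t) ^ 2 = r ^ 2 - 2 * t * r + t ^ 2 := by ring
          linarith
        have h2 : S ≤ Real.sqrt ((r - t) ^ 2) := Real.sqrt_le_sqrt h1
        rw [Real.sqrt_sq (by linarith : (0:ℝ) ≤ r - t)] at h2
        linarith
    -- p belongs to all the balls
    have hpC : p ∈ ⋂ z ∈ σ, Metric.closedBall z α := by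
      apply Set.mem_iInter₂.mpr
      intro z hz
      rw [Metric.mem_closedBall]
      have hmz2 := hI2 z hz
      have hh2a2 : h ^ 2 ≤ α ^ 2 := by linarith [sq_nonneg ‖m - z‖]
      have hhα : h ≤ α := by
        have h1 : Real.sqrt (h ^ 2) ≤ Real.sqrt (α ^ 2) := Real.sqrt_le_sqrt hh2a2
        rwa [Real.sqrt_sq hh0.le, Real.sqrt_sq hα0] at h1
      set s : ℝ := Real.sqrt (α ^ 2 - h ^ 2) with hsdef
      have hs2 : s ^ 2 = α ^ 2 - h ^ 2 := Real.sq_sqrt (by linarith)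
      have hs0 : 0 ≤ s := Real.sqrt_nonneg _
      have hmz : ‖m - z‖ ≤ s := by
        have := Real.sqrt_le_sqrt hmz2
        rwa [Real.sqrt_sq (norm_nonneg _)] at this
      have hss : s ≤ α := by
        have h1 : s ≤ Real.sqrt (α ^ 2) := Real.sqrt_le_sqrt (by linarith [sq_nonneg h])
        rwa [Real.sqrt_sq hα0] at h1
      have ha2r2 : α ^ 2 ≤ r ^ 2 := pow_le_pow_left₀ hα0 hαr.le 2
      have hSs : s ≤ S := Real.sqrt_le_sqrt (by linarith)
      have hkey2 : r - S ≤ α - s := by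
        have eprod : (r - S) * (r + S) = (α - s) * (α + s) := by
          linear_combination hs2 - hS2
        have h2 : α + s ≤ r + S := by linarith
        have h3 : (α - s) * (α + s) ≤ (α - s) * (r + S) :=
          mul_le_mul_of_nonneg_left h2 (by linarith)
        have h4 : (r - S) * (r + S) ≤ (α - s) * (r + S) := by linarith
        exact le_of_mul_le_mul_right h4 (by linarith)
      calc dist p z ≤ dist p m + dist m z := dist_triangle _ _ _
      _ = t + ‖m - z‖ := by rw [dist_comm p m, ← htdef, dist_eq_norm]
      _ ≤ (r - S) + s := by linarith [hbound, hmz]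
      _ ≤ α := by linarith [hkey2]
    have hpX : p ∈ X := ⟨hpnear.1, hpC⟩
    -- final contradiction
    have hh2ρ2 : h ^ 2 ≤ ρ ^ 2 := pow_le_pow_left₀ hh0.le hh_ρ 2
    set S' : ℝ := Real.sqrt (ρ ^ 2 - h ^ 2) with hS'def
    have hS'2 : S' ^ 2 = ρ ^ 2 - h ^ 2 := Real.sq_sqrt (by linarith)
    have hS'0 : 0 ≤ S' := Real.sqrt_nonneg _
    have hym : dist y m = S' := by
      have hdm2 : (dist y m) ^ 2 = ρ ^ 2 - h ^ 2 := by
        rw [dist_eq_norm]; exact hI1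
      rw [← Real.sqrt_sq (dist_nonneg : (0:ℝ) ≤ dist y m), hdm2]
    have hρ0 : 0 < ρ := by linarith
    have hh2pos : 0 < h ^ 2 := pow_pos hh0 2
    have hS'ρ : S' < ρ := ReachAux.lt_of_sq_lt' hS'0 hρ0 (by linarith)
    have hρ2r2 : ρ ^ 2 < r ^ 2 := by
      have := pow_lt_pow_left₀ hρr hρ0.le (two_ne_zero)
      exact this
    have hSpos : 0 < S := by
      rcases eq_or_lt_of_le hS0 with h0 | h0
      · exfalso
        have : S ^ 2 = 0 := by rw [← h0]; ring
        linarith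
      · exact h0
    have hSS' : S' < S := ReachAux.lt_of_sq_lt' hS'0 hSpos (by linarith)
    have hstrict : r - S < ρ - S' := by
      by_contra hcon
      push_neg at hcon
      have eS : (r - S) * (r + S) = h ^ 2 := by linear_combination -hS2
      have eS' : (ρ - S') * (ρ + S') = h ^ 2 := by linear_combination -hS'2
      have m1 : (ρ - S') * (ρ + S') ≤ (r - S) * (ρ + S') :=
        mul_le_mul_of_nonneg_right hcon (by linarith)
      have m2 : (r - S) * (ρ + S') < (r - S) * (r + S) :=
        mul_lt_mul_of_pos_left (by linarith) (by linarith)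
      linarith
    have hyp : ρ ≤ dist y p := by
      rw [← hρ1]
      exact hx₁near.2 p hpX
    have hypm : dist y p ≤ dist y m + t := by
      rw [htdef]
      exact dist_triangle y m p
    rw [hym] at hypm
    linarith
  have hkey : e ≤ reach X := by
    rw [reach]
    exact le_sSup hmem
  have : reach X < e := lt_of_le_of_lt (le_max_left _ _) he1
  exact lt_irrefl e (lt_of_le_of_lt hkey this)
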